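/- Let X be a set, f : X → X a bijection, λ > 1, and ĥ₊, ĥ₋ : X → ℝ functions with ĥ₊∘f = λ·ĥ₊ and ĥ₋∘f = λ⁻¹·ĥ₋. Suppose ĥ := ĥ₊ + ĥ₋ is nonnegative on X. Then ĥ₊(x) ≥ 0 and ĥ₋(x) ≥ 0 for all x ∈ X. -/

import Mathlib

lemma aux_chp {X : Type*} (f : X → X) (l : ℝ) (hl : 1 < l)
    (hp hm : X → ℝ)
    (hfp : ∀ x, hp (f x) = l * hp x) (hfm : ∀ x, hm (f x) = l⁻¹ * hm x)
    (hnn : ∀ x, 0 ≤ hp x + hm x) : ∀ x, 0 ≤ hp x := by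
  have hl0 : (0:ℝ) < l := lt_trans one_pos hl
  have hiterp : ∀ n x, hp (f^[n] x) = l ^ n * hp x := by
    intro n
    induction n with
    | zero => simp
    | succ n ih =>
      intro x
      rw [Function.iterate_succ_apply', hfp, ih, pow_succ]
      ring
  have hiterm : ∀ n x, hm (f^[n] x) = (l⁻¹) ^ n * hm x := by
    intro n
    induction n with
    | zero => simp
    | succ n ih =>
      intro x
      rw [Function.iterate_succ_apply', hfm, ih, pow_succ]
      ring
  intro x
  have key : ∀ n : ℕ, -((l⁻¹) ^ (2 * n) * hm x) ≤ hp x := by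
    intro n
    have h := hnn (f^[n] x)
    rw [hiterp, hiterm] at h
    have hln : (0:ℝ) < (l⁻¹) ^ n := pow_pos (inv_pos.mpr hl0) n
    have := mul_nonneg hln.le h
    have hll : (l⁻¹) ^ n * (l ^ n * hp x) = hp x := by
      rw [inv_pow, inv_mul_cancel_left₀ (pow_ne_zero n hl0.ne')]
    have hll2 : (l⁻¹) ^ (2 * n) = (l⁻¹) ^ n * (l⁻¹) ^ n := by rw [two_mul, pow_add]
    rw [mul_add, hll, ← mul_assoc, ← hll2] at this
    linarith
  have htend : Filter.Tendsto (fun n : ℕ => -((l⁻¹) ^ (2 * n) * hm x))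
      Filter.atTop (nhds 0) := by
    have h1 : |l⁻¹| < 1 := by
      rw [abs_of_pos (inv_pos.mpr hl0)]
      exact inv_lt_one_of_one_lt₀ hl
    have h2 : Filter.Tendsto (fun n : ℕ => (l⁻¹) ^ n) Filter.atTop (nhds 0) :=
      tendsto_pow_atTop_nhds_zero_of_abs_lt_one h1
    have h3 := (h2.comp (Filter.tendsto_atTop_atTop_of_monotone
      (fun a b hab => Nat.mul_le_mul_left 2 hab)
      (fun b => ⟨b, Nat.le_mul_of_pos_left b two_pos⟩))).mul_const (hm x)
    simpa using h3.neg
  exact le_of_tendsto htend (Filter.Eventually.of_forall key)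

/-- Let `f : X → X` be a bijection, `λ > 1`, and `ĥ₊, ĥ₋ : X → ℝ` with `ĥ₊ ∘ f = λ ĥ₊` and
`ĥ₋ ∘ f = λ⁻¹ ĥ₋`. If `ĥ := ĥ₊ + ĥ₋` is nonnegative on `X`, then `ĥ₊ ≥ 0` and `ĥ₋ ≥ 0`
everywhere. -/
theorem canonical_height_parts_nonneg {X : Type*} (f : X ≃ X) (l : ℝ) (hl : 1 < l)
    (hp hm : X → ℝ)
    (hfp : ∀ x, hp (f x) = l * hp x) (hfm : ∀ x, hm (f x) = l⁻¹ * hm x)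
    (hnn : ∀ x, 0 ≤ hp x + hm x) :
    ∀ x, 0 ≤ hp x ∧ 0 ≤ hm x := by
  have hl0 : (0:ℝ) < l := lt_trans one_pos hl
  have hfm' : ∀ x, hm (f.symm x) = l * hm x := by
    intro x
    have := hfm (f.symm x)
    rw [f.apply_symm_apply] at this
    rw [this, ← mul_assoc, mul_inv_cancel₀ hl0.ne', one_mul]
  have hfp' : ∀ x, hp (f.symm x) = l⁻¹ * hp x := by
    intro x
    have := hfp (f.symm x)
    rw [f.apply_symm_apply] at this
    rw [this, ← mul_assoc, inv_mul_cancel₀ hl0.ne', one_mul]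
  intro x
  refine ⟨aux_chp f l hl hp hm hfp hfm hnn x,
    aux_chp f.symm l hl hm hp hfm' hfp' (fun y => by linarith [hnn y]) x⟩
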